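/- The multi-sample (importance-weighted) bound is tighter than the single-sample ELBO and monotone in K: for i.i.d. z_1,...,z_K ~ q, L_K := E[log (1/K) ∑_{k=1}^K p(x, z_k)/q(z_k)] satisfies L_1 ≤ L_K ≤ L_{K+1} ≤ log p(x). -/

import Mathlib

open MeasureTheory Real

lemma iwae_map_eval {Z : Type*} [MeasurableSpace Z] (q : Measure Z) [IsProbabilityMeasure q]
    {K : ℕ} (j : Fin K) :
    Measure.map (fun zs : Fin K → Z => zs j) (Measure.pi fun _ : Fin K => q) = q := by
  classical
  ext s hs
  rw [Measure.map_apply (measurable_pi_apply j) hs]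
  have h1 : (fun zs : Fin K → Z => zs j) ⁻¹' s
      = Set.pi Set.univ (fun i => if i = j then s else Set.univ) := by
    ext zs
    simp only [Set.mem_preimage, Set.mem_pi, Set.mem_univ, true_implies]
    constructor
    · intro h i; split <;> simp_all
    · intro h; simpa using h j
  rw [h1, Measure.pi_pi]
  simp [apply_ite q, measure_univ]

lemma iwae_map_succAbove {Z : Type*} [MeasurableSpace Z] (q : Measure Z) [IsProbabilityMeasure q]
    {K : ℕ} (j : Fin (K + 1)) :
    MeasurePreserving (fun zs : Fin (K + 1) → Z => fun k : Fin K => zs (j.succAbove k))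
      (Measure.pi fun _ : Fin (K + 1) => q) (Measure.pi fun _ : Fin K => q) := by
  have h := measurePreserving_piFinSuccAbove (fun _ : Fin (K + 1) => q) j
  have h2 : (fun zs : Fin (K + 1) → Z => fun k : Fin K => zs (j.succAbove k))
      = Prod.snd ∘ (MeasurableEquiv.piFinSuccAbove (fun _ => Z) j) := rfl
  refine ⟨measurable_pi_iff.2 fun k => measurable_pi_apply _, ?_⟩
  rw [h2, ← Measure.map_map measurable_snd (MeasurableEquiv.measurable _), h.map_eq,
    Measure.map_snd_prod]
  simp

/-- The multi-sample (importance-weighted) bound L_K of Burda et al. is tighter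
than the single-sample ELBO, monotone in K, and never exceeds log p(x):
L_1 ≤ L_K ≤ L_{K+1} ≤ log p(x). -/
theorem iwae_bound_monotone
    {Z : Type*} [MeasurableSpace Z]
    (q : Measure Z) [IsProbabilityMeasure q]
    -- importance weights w(z) = p(x, z) / q(z)
    (w : Z → ℝ) (hw_pos : ∀ z, 0 < w z) (hw_meas : Measurable w)
    (hw_int : Integrable w q)
    -- the marginal likelihood p(x) = ∫ w dq
    (px : ℝ) (hpx : px = ∫ z, w z ∂q)
    -- the multi-sample bounds over i.i.d. samples z_1, ..., z_K ~ q
    (L : ℕ → ℝ)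
    (hL : ∀ K, L K = ∫ zs : Fin K → Z,
      Real.log ((1 / (K : ℝ)) * ∑ k, w (zs k)) ∂(Measure.pi fun _ : Fin K => q))
    (hL_int : ∀ K, Integrable
      (fun zs : Fin K → Z => Real.log ((1 / (K : ℝ)) * ∑ k, w (zs k)))
      (Measure.pi fun _ : Fin K => q)) :
    ∀ K : ℕ, 0 < K → L 1 ≤ L K ∧ L K ≤ L (K + 1) ∧ L K ≤ Real.log px := by
  classical
  have hpx_pos : 0 < px := by
    rw [hpx]
    refine (integral_pos_iff_support_of_nonneg (fun z => (hw_pos z).le) hw_int).2 ?_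
    have hs : Function.support w = Set.univ := by
      ext z; simp [Function.support, (hw_pos z).ne']
    simp [hs]
  -- integrability and integral of each coordinate weight
  have hInt_k : ∀ (K : ℕ) (k : Fin K),
      Integrable (fun zs : Fin K → Z => w (zs k)) (Measure.pi fun _ : Fin K => q) := by
    intro K k
    have := (integrable_map_measure (μ := Measure.pi fun _ : Fin K => q)
      (f := fun zs : Fin K → Z => zs k) (g := w)
      (by rw [iwae_map_eval q k]; exact hw_meas.aestronglyMeasurable)
      (measurable_pi_apply k).aemeasurable).1
    exact this (by rw [iwae_map_eval q k]; exact hw_int)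
  have hIntgr_k : ∀ (K : ℕ) (k : Fin K),
      ∫ zs : Fin K → Z, w (zs k) ∂(Measure.pi fun _ : Fin K => q) = px := by
    intro K k
    have hmap := integral_map (μ := Measure.pi fun _ : Fin K => q)
      (φ := fun zs : Fin K → Z => zs k) (f := w)
      (measurable_pi_apply k).aemeasurable
      (by rw [iwae_map_eval q k]; exact hw_meas.aestronglyMeasurable)
    rw [iwae_map_eval q k] at hmap
    rw [hpx, ← hmap]
  -- upper bound : L K ≤ log px, any K > 0
  have upper : ∀ K : ℕ, 0 < K → L K ≤ Real.log px := by
    intro K hK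
    have hKR : (0:ℝ) < (K:ℝ) := by exact_mod_cast hK
    set μ : Measure (Fin K → Z) := Measure.pi fun _ : Fin K => q with hμ
    have hFint : Integrable
        (fun zs : Fin K → Z => (1 / (K : ℝ)) * ∑ k, w (zs k)) μ :=
      (integrable_finset_sum Finset.univ fun k _ => hInt_k K k).const_mul _
    have hFintegral : ∫ zs, ((1 / (K : ℝ)) * ∑ k, w (zs k)) ∂μ = px := by
      rw [integral_const_mul, integral_finset_sum Finset.univ fun k _ => hInt_k K k]
      simp only [hIntgr_k K]
      rw [Finset.sum_const, Finset.card_univ, Fintype.card_fin, nsmul_eq_mul]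
      field_simp
    have hpt : ∀ zs : Fin K → Z,
        Real.log ((1 / (K : ℝ)) * ∑ k, w (zs k))
          ≤ ((1 / (K : ℝ)) * ∑ k, w (zs k)) / px + (Real.log px - 1) := by
      intro zs
      set t := (1 / (K : ℝ)) * ∑ k, w (zs k) with ht
      have htpos : 0 < t := by
        apply mul_pos (by positivity)
        exact Finset.sum_pos (fun k _ => hw_pos _) ⟨⟨0, hK⟩, Finset.mem_univ _⟩
      have := Real.log_le_sub_one_of_pos (div_pos htpos hpx_pos)
      rw [Real.log_div htpos.ne' hpx_pos.ne'] at this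
      linarith
    have := integral_mono (hL_int K)
      ((hFint.div_const px).add (integrable_const _)) hpt
    rw [hL K]
    calc ∫ zs, Real.log ((1 / (K : ℝ)) * ∑ k, w (zs k)) ∂μ
        ≤ ∫ zs, (((1 / (K : ℝ)) * ∑ k, w (zs k)) / px + (Real.log px - 1)) ∂μ := this
      _ = Real.log px := by
          rw [integral_add (hFint.div_const px) (integrable_const _), integral_div,
            hFintegral, div_self hpx_pos.ne']
          simp [measure_univ]
  -- monotonicity : L K ≤ L (K+1) for K ≥ 1
  have mono : ∀ K : ℕ, 0 < K → L K ≤ L (K + 1) := by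
    intro K hK
    have hKR : (0:ℝ) < (K:ℝ) := by exact_mod_cast hK
    set μ : Measure (Fin (K + 1) → Z) := Measure.pi fun _ : Fin (K + 1) => q with hμ
    set g : (Fin K → Z) → ℝ :=
      fun ys => Real.log ((1 / (K : ℝ)) * ∑ k, w (ys k)) with hg
    have hg_meas : Measurable g :=
      (Measurable.const_mul (Finset.measurable_sum Finset.univ
        fun k _ => hw_meas.comp (measurable_pi_apply k)) _).log
    have hT : ∀ j : Fin (K + 1), MeasurePreserving
        (fun zs : Fin (K + 1) → Z => fun k : Fin K => zs (j.succAbove k)) μ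
        (Measure.pi fun _ : Fin K => q) := fun j => iwae_map_succAbove q j
    have hTint : ∀ j : Fin (K + 1),
        Integrable (fun zs : Fin (K + 1) → Z => g (fun k => zs (j.succAbove k))) μ := by
      intro j
      have := (integrable_map_measure
        (by rw [(hT j).map_eq]; exact hg_meas.aestronglyMeasurable)
        (hT j).measurable.aemeasurable).1
      exact this (by rw [(hT j).map_eq]; exact hL_int K)
    have hTintegral : ∀ j : Fin (K + 1),
        ∫ zs, g (fun k => zs (j.succAbove k)) ∂μ = L K := by
      intro j
      rw [hL K, ← (hT j).map_eq,
        integral_map (hT j).measurable.aemeasurable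
          (by rw [(hT j).map_eq]; exact hg_meas.aestronglyMeasurable)]
    -- pointwise Jensen
    have hpt : ∀ zs : Fin (K + 1) → Z,
        ∑ j : Fin (K + 1), (1 / ((K:ℝ) + 1)) * g (fun k => zs (j.succAbove k))
          ≤ Real.log ((1 / ((K + 1 : ℕ) : ℝ)) * ∑ k, w (zs k)) := by
      intro zs
      set p : Fin (K + 1) → ℝ :=
        fun j => (1 / (K : ℝ)) * ∑ k : Fin K, w (zs (j.succAbove k)) with hp
      have hp_pos : ∀ j, p j ∈ Set.Ioi (0:ℝ) := by
        intro j
        exact mul_pos (by positivity)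
          (Finset.sum_pos (fun k _ => hw_pos _) ⟨⟨0, hK⟩, Finset.mem_univ _⟩)
      have hwsum : ∑ _j : Fin (K + 1), (1 / ((K:ℝ) + 1)) = 1 := by
        rw [Finset.sum_const, Finset.card_univ, Fintype.card_fin, nsmul_eq_mul]
        push_cast; field_simp
      have jensen := (strictConcaveOn_log_Ioi.concaveOn).le_map_sum
        (t := Finset.univ) (w := fun _ : Fin (K+1) => 1 / ((K:ℝ) + 1)) (p := p)
        (fun i _ => by positivity) hwsum (fun i _ => hp_pos i)
      simp only [smul_eq_mul] at jensen
      have hsum_p : ∑ j, (1 / ((K:ℝ) + 1)) * p j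
          = (1 / (((K:ℕ) + 1 : ℕ) : ℝ)) * ∑ k, w (zs k) := by
        rw [← Finset.mul_sum]
        have h1 : ∀ j : Fin (K + 1),
            ∑ k : Fin K, w (zs (j.succAbove k)) = (∑ k, w (zs k)) - w (zs j) := by
          intro j
          have := Fin.sum_univ_succAbove (fun k => w (zs k)) j
          linarith [this]
        have : ∑ j, p j = ∑ k, w (zs k) := by
          simp only [hp, h1, ← Finset.mul_sum, Finset.sum_sub_distrib, Finset.sum_const,
            Finset.card_univ, Fintype.card_fin, nsmul_eq_mul]
          field_simp
          push_cast; ring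
        rw [this]
        push_cast
        ring
      rw [hsum_p] at jensen
      exact jensen
    -- integrate
    have hle := integral_mono
      (μ := μ)
      (integrable_finset_sum Finset.univ fun j _ => (hTint j).const_mul _)
      (hL_int (K + 1)) hpt
    rw [integral_finset_sum Finset.univ (fun j _ => (hTint j).const_mul _)] at hle
    simp only [integral_const_mul, hTintegral] at hle
    rw [Finset.sum_const, Finset.card_univ, Fintype.card_fin, nsmul_eq_mul] at hle
    have : (((K:ℕ) + 1 : ℕ) : ℝ) * (1 / ((K:ℝ) + 1) * L K) = L K := by
      push_cast; field_simp
    rw [this] at hle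
    rw [hL (K + 1)]
    exact hle
  -- chain for L 1 ≤ L K
  have chain : ∀ K : ℕ, 0 < K → L 1 ≤ L K := by
    intro K hK
    induction K with
    | zero => omega
    | succ n ih =>
      rcases Nat.eq_zero_or_pos n with h | h
      · subst h; exact le_refl _
      · exact le_trans (ih h) (mono n h)
  intro K hK
  exact ⟨chain K hK, mono K hK, upper K hK⟩
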